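/- Let (X,d) be a pseudometric space, let W ⊆ X be a nonempty finite set, let V and C be finite multisets of points of X, let c ∈ X, and let f ≥ 0 be a real number. If Σ_{v∈V} max(d(W,v) − d(c,v), 0) ≤ f, then |V ∩ C| · d(W,c) ≤ f + 2 · Σ_{v∈C} d(c,v), where |V ∩ C| denotes the number of requests of V that belong to C and d(W,x) := min_{k∈W} d(k,x). -/

import Mathlib

/-- Corollary 1 of the paper in abstract form.  `(X, dist)` is a pseudometric space,
`W` is the (nonempty, finite) set of caches, `V` is the multiset of requests processed
so far, `C` is an optimal cluster with cache location `c` and caching cost `f`.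
If the potential invariant `∑_{v ∈ V} max(d(W,v) − d(c,v), 0) ≤ f` holds, then
`|V ∩ C| · d(W,c) ≤ f + 2 · ∑_{v ∈ C} d(c,v)`, where `d(W,x) = min_{k ∈ W} dist k x`
and `|V ∩ C|` is the number of requests of `V` belonging to `C`. -/
theorem caching_corollary1 {X : Type*} [PseudoMetricSpace X] [DecidableEq X]
    (W : Finset X) (hW : W.Nonempty) (V C : Multiset X) (c : X) (f : ℝ) (hf : 0 ≤ f)
    (hpot : (V.map fun v => max (W.inf' hW (fun k => dist k v) - dist c v) 0).sum ≤ f) :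
    ((V ∩ C).card : ℝ) * W.inf' hW (fun k => dist k c) ≤
      f + 2 * (C.map fun v => dist c v).sum := by
  set g : X → ℝ := fun v => max (W.inf' hW (fun k => dist k v) - dist c v) 0 with hg
  set D : ℝ := W.inf' hW (fun k => dist k c) with hD
  -- pointwise: D - 2 * dist c v ≤ g v
  have hpt : ∀ v : X, D - 2 * dist c v ≤ g v := by
    intro v
    have h1 : D - dist c v ≤ W.inf' hW (fun k => dist k v) := by
      apply Finset.le_inf'
      intro k hk
      have hD2 : D ≤ dist k c := Finset.inf'_le _ hk
      have htr := dist_triangle k v c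
      have hcv : dist v c = dist c v := dist_comm v c
      linarith
    have : D - 2 * dist c v ≤ W.inf' hW (fun k => dist k v) - dist c v := by linarith
    exact this.trans (le_max_left _ _)
  -- sum over V ∩ C
  have h1 : ((V ∩ C).map fun v => D - 2 * dist c v).sum ≤ ((V ∩ C).map g).sum :=
    Multiset.sum_map_le_sum_map _ _ (fun v _ => hpt v)
  -- ((V∩C).map g).sum ≤ (V.map g).sum
  have hle : V ∩ C ≤ V := Multiset.inter_le_left
  obtain ⟨t, ht⟩ := Multiset.le_iff_exists_add.mp hle
  have h2 : ((V ∩ C).map g).sum ≤ (V.map g).sum := by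
    have heq : ((V ∩ C).map g).sum + (t.map g).sum = (V.map g).sum := by
      rw [← Multiset.sum_add, ← Multiset.map_add, ← ht]
    have : 0 ≤ (t.map g).sum := by
      apply Multiset.sum_nonneg
      intro x hx
      obtain ⟨v, _, rfl⟩ := Multiset.mem_map.mp hx
      exact le_max_right _ _
    linarith
  -- sum of constants
  have h3 : ((V ∩ C).map fun v => D - 2 * dist c v).sum =
      ((V ∩ C).card : ℝ) * D - 2 * ((V ∩ C).map fun v => dist c v).sum := by
    rw [Multiset.sum_map_sub]
    congr 1
    · rw [Multiset.map_const', Multiset.sum_replicate, nsmul_eq_mul]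
    · rw [← Multiset.sum_map_mul_left]
  -- (V∩C) distances ≤ C distances
  have hleC : V ∩ C ≤ C := Multiset.inter_le_right
  obtain ⟨s, hs⟩ := Multiset.le_iff_exists_add.mp hleC
  have h4 : ((V ∩ C).map fun v => dist c v).sum ≤ (C.map fun v => dist c v).sum := by
    have heq : ((V ∩ C).map fun v => dist c v).sum + (s.map fun v => dist c v).sum
        = (C.map fun v => dist c v).sum := by
      rw [← Multiset.sum_add, ← Multiset.map_add, ← hs]
    have : 0 ≤ (s.map fun v => dist c v).sum := by
      apply Multiset.sum_nonneg
      intro x hx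
      obtain ⟨v, _, rfl⟩ := Multiset.mem_map.mp hx
      exact dist_nonneg
    linarith
  linarith [h1, h2, h3, h4, hpot]
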